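/- With c*_i(α,x) = (2^i/i!) ∑_{k=0}^{i-2} C(α+1, i-k-2) C(i-2α-5, k) ((1-x)/2)^k for i ≥ 2 and c*_1 = 0, one has ∑_{i=1}^{∞} c*_i(α,-1) = 2·₁F₁(-α-1; 3; 2) = 2 ∑_{m=0}^{∞} (-α-1)_m 2^m / (m! (3)_m). -/
import Mathlib


open Finset Real

/-- Rising factorial (Pochhammer symbol) `(a)_m`. -/
noncomputable def poch (a : ℝ) (m : ℕ) : ℝ := (ascPochhammer ℝ m).eval a

/-- Generalized binomial coefficient `C(a,b) = (a-b+1)_b / b!`. -/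
noncomputable def gbinom (a : ℝ) (b : ℕ) : ℝ := poch (a - b + 1) b / (Nat.factorial b : ℝ)

/-- Classical Laguerre polynomial `L_n^{(α)}(x)`. -/
noncomputable def lag (α : ℝ) (n : ℕ) (x : ℝ) : ℝ :=
  ∑ k ∈ Finset.range (n + 1),
    ((-1 : ℝ) ^ k / (Nat.factorial k : ℝ)) * gbinom ((n : ℝ) + α) (n - k) * x ^ k

/-- The coefficients `c*_i(α,x)` (the defining sum is empty for i ≤ 1, so `c*_1 = 0`). -/
noncomputable def cstar (α : ℝ) (i : ℕ) (x : ℝ) : ℝ :=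
  ((2 : ℝ) ^ i / (Nat.factorial i : ℝ)) * ∑ k ∈ Finset.range (i - 1),
    gbinom (α + 1) (i - k - 2) * gbinom ((i : ℝ) - 2 * α - 5) k * ((1 - x) / 2) ^ k

lemma poch_zero (a : ℝ) : poch a 0 = 1 := by simp [poch]

lemma poch_succ (a : ℝ) (m : ℕ) : poch a (m + 1) = poch a m * (a + m) := by
  simpa [poch] using ascPochhammer_succ_eval m a

lemma poch_succ_left (a : ℝ) (m : ℕ) : poch a (m + 1) = a * poch (a + 1) m := by
  simp [poch, ascPochhammer_succ_left, Polynomial.eval_comp]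

lemma poch_neg_nat (k m : ℕ) (h : k < m) : poch (-(k : ℝ)) m = 0 := by
  induction m with
  | zero => omega
  | succ m ih =>
    rw [poch_succ]
    rcases Nat.lt_succ_iff_lt_or_eq.mp h with h' | h'
    · rw [ih h', zero_mul]
    · subst h'; simp

lemma gbinom_zero (a : ℝ) : gbinom a 0 = 1 := by simp [gbinom, poch_zero]

lemma gbinom_nat_zero (b : ℕ) : gbinom 0 (b + 1) = 0 := by
  have h : ((0 : ℝ) - (↑(b + 1) : ℕ) + 1) = -(b : ℝ) := by push_cast; ring
  rw [gbinom, h, poch_neg_nat b (b + 1) (Nat.lt_succ_self b), zero_div]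

lemma gbinom_pascal (a : ℝ) (j : ℕ) :
    gbinom (a + 1) (j + 1) = gbinom a (j + 1) + gbinom a j := by
  unfold gbinom
  have hfac : ((j + 1).factorial : ℝ) = (j + 1) * (j.factorial : ℝ) := by
    rw [Nat.factorial_succ]; push_cast; ring
  have h1 : poch (a + 1 - (↑(j + 1) : ℕ) + 1) (j + 1) = poch (a - j + 1) j * (a + 1) := by
    have e : (a + 1 - (↑(j + 1) : ℕ) + 1 : ℝ) = a - j + 1 := by push_cast; ring
    rw [e, poch_succ]; ring
  have h2 : poch (a - (↑(j + 1) : ℕ) + 1) (j + 1) = (a - j) * poch (a - j + 1) j := by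
    have e : (a - (↑(j + 1) : ℕ) + 1 : ℝ) = a - j := by push_cast; ring
    rw [e, poch_succ_left]
  rw [h1, h2, hfac]
  have hj : (j.factorial : ℝ) ≠ 0 := Nat.cast_ne_zero.mpr (Nat.factorial_ne_zero j)
  have hj1 : ((j : ℝ) + 1) ≠ 0 := by positivity
  field_simp
  ring

lemma vandermonde (n : ℕ) : ∀ (j : ℕ) (y : ℝ),
    ∑ k ∈ Finset.range (j + 1), gbinom (n : ℝ) (j - k) * gbinom y k
      = gbinom ((n : ℝ) + y) j := by
  induction n with
  | zero =>
    intro j y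
    rw [Finset.sum_eq_single j]
    · simp [gbinom_zero]
    · intro k hk hkj
      have hk' : k < j := lt_of_le_of_ne (Nat.lt_succ_iff.mp (Finset.mem_range.mp hk)) hkj
      have h : j - k = (j - k - 1) + 1 := by omega
      rw [h]
      simp [gbinom_nat_zero]
    · intro h; exact absurd (Finset.self_mem_range_succ j) h
  | succ n ih =>
    intro j y
    cases j with
    | zero => simp [gbinom_zero]
    | succ j' =>
      have hcast : ((↑(n + 1) : ℝ)) = (n : ℝ) + 1 := by push_cast; ring
      calc ∑ k ∈ Finset.range (j' + 1 + 1), gbinom (↑(n + 1)) (j' + 1 - k) * gbinom y k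
          = ∑ k ∈ Finset.range (j' + 1),
              (gbinom (n : ℝ) (j' + 1 - k) * gbinom y k
                + gbinom (n : ℝ) (j' - k) * gbinom y k)
            + gbinom (n : ℝ) 0 * gbinom y (j' + 1) := by
            rw [Finset.sum_range_succ]
            congr 1
            · apply Finset.sum_congr rfl
              intro k hk
              have hk' : k ≤ j' := Nat.lt_succ_iff.mp (Finset.mem_range.mp hk)
              have h : j' + 1 - k = (j' - k) + 1 := by omega
              rw [h, hcast, gbinom_pascal]
              ring
            · simp [gbinom_zero]
        _ = (∑ k ∈ Finset.range (j' + 1), gbinom (n : ℝ) (j' + 1 - k) * gbinom y k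
              + gbinom (n : ℝ) 0 * gbinom y (j' + 1))
            + ∑ k ∈ Finset.range (j' + 1), gbinom (n : ℝ) (j' - k) * gbinom y k := by
            rw [Finset.sum_add_distrib]; ring
        _ = ∑ k ∈ Finset.range (j' + 1 + 1), gbinom (n : ℝ) (j' + 1 - k) * gbinom y k
            + ∑ k ∈ Finset.range (j' + 1), gbinom (n : ℝ) (j' - k) * gbinom y k := by
            rw [Finset.sum_range_succ _ (j' + 1), Nat.sub_self]
        _ = gbinom ((n : ℝ) + y) (j' + 1) + gbinom ((n : ℝ) + y) j' := by
            rw [ih (j' + 1) y, ih j' y]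
        _ = gbinom ((↑(n + 1) : ℝ) + y) (j' + 1) := by
            rw [show ((↑(n + 1) : ℝ) + y) = ((n : ℝ) + y) + 1 by push_cast; ring,
              gbinom_pascal]

lemma poch_three (m : ℕ) : poch 3 m * 2 = ((m + 2).factorial : ℝ) := by
  induction m with
  | zero => norm_num [poch_zero]
  | succ m ih =>
    rw [poch_succ, show m + 1 + 2 = (m + 2) + 1 by ring, Nat.factorial_succ]
    push_cast
    push_cast at ih
    nlinarith [ih]

lemma poch_three_ne (m : ℕ) : poch 3 m ≠ 0 := by
  intro h
  have := poch_three m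
  rw [h, zero_mul] at this
  exact (Nat.cast_ne_zero.mpr (Nat.factorial_ne_zero (m + 2))) this.symm

lemma cstar_eval (α : ℕ) (j : ℕ) :
    cstar (α : ℝ) (j + 2) (-1)
      = (2 : ℝ) ^ (j + 2) / ((j + 2).factorial : ℝ)
        * (poch (-(α : ℝ) - 1) j / (j.factorial : ℝ)) := by
  unfold cstar
  have hr : (j + 2) - 1 = j + 1 := by omega
  rw [hr]
  congr 1
  have hsum : ∑ k ∈ Finset.range (j + 1),
      gbinom ((α : ℝ) + 1) (j + 2 - k - 2) * gbinom ((↑(j + 2) : ℝ) - 2 * α - 5) k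
        * ((1 - (-1)) / 2) ^ k
      = ∑ k ∈ Finset.range (j + 1),
        gbinom ((↑(α + 1) : ℕ) : ℝ) (j - k) * gbinom ((↑(j + 2) : ℝ) - 2 * α - 5) k := by
    apply Finset.sum_congr rfl
    intro k hk
    have hk' : k ≤ j := Nat.lt_succ_iff.mp (Finset.mem_range.mp hk)
    have h1 : j + 2 - k - 2 = j - k := by omega
    have h2 : ((α : ℝ) + 1) = ((↑(α + 1) : ℕ) : ℝ) := by push_cast; ring
    rw [h1, h2]
    norm_num
  rw [hsum, vandermonde (α + 1) j ((↑(j + 2) : ℝ) - 2 * α - 5)]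
  unfold gbinom
  have h3 : ((↑(α + 1) : ℕ) : ℝ) + ((↑(j + 2) : ℝ) - 2 * α - 5) - j + 1 = -(α : ℝ) - 1 := by
    push_cast; ring
  rw [h3]

/-- `∑_{i=1}^∞ c*_i(α,-1) = 2 ₁F₁(-α-1;3;2)` for nonnegative integer α. -/
theorem statement8 (α : ℕ) :
    ∑' i : ℕ, cstar (α : ℝ) (i + 1) (-1)
      = 2 * ∑' m : ℕ, poch (-(α : ℝ) - 1) m * 2 ^ m / ((Nat.factorial m : ℝ) * poch 3 m) := by
  have hpoch0 : ∀ m : ℕ, α + 2 ≤ m → poch (-(α : ℝ) - 1) m = 0 := by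
    intro m hm
    have e : -(α : ℝ) - 1 = -((α + 1 : ℕ) : ℝ) := by push_cast; ring
    rw [e]
    exact poch_neg_nat (α + 1) m (by omega)
  have hzero1 : ∀ i ∉ Finset.range (α + 3), cstar (α : ℝ) (i + 1) (-1) = 0 := by
    intro i hi
    have hi' : α + 3 ≤ i := by simpa using hi
    obtain ⟨j, rfl⟩ : ∃ j, i = j + 1 := ⟨i - 1, by omega⟩
    rw [show j + 1 + 1 = j + 2 by ring, cstar_eval, hpoch0 j (by omega)]
    simp
  have hzero2 : ∀ m ∉ Finset.range (α + 2),
      poch (-(α : ℝ) - 1) m * 2 ^ m / ((Nat.factorial m : ℝ) * poch 3 m) = 0 := by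
    intro m hm
    have hm' : α + 2 ≤ m := by simpa using hm
    rw [hpoch0 m hm']
    simp
  rw [tsum_eq_sum hzero1, tsum_eq_sum hzero2, Finset.sum_range_succ']
  have h0 : cstar (α : ℝ) (0 + 1) (-1) = 0 := by
    simp [cstar]
  rw [h0, add_zero, Finset.mul_sum]
  apply Finset.sum_congr rfl
  intro j _
  rw [show j + 1 + 1 = j + 2 by ring, cstar_eval]
  have h3 : poch 3 j = ((j + 2).factorial : ℝ) / 2 := by
    have := poch_three j; linarith
  have hfj : (j.factorial : ℝ) ≠ 0 := Nat.cast_ne_zero.mpr (Nat.factorial_ne_zero j)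
  have hfj2 : (((j + 2).factorial : ℕ) : ℝ) ≠ 0 :=
    Nat.cast_ne_zero.mpr (Nat.factorial_ne_zero (j + 2))
  rw [h3]
  field_simp
  ring
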